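/- Let n be a natural number and let ℓ > 2 be a natural number. The set of conjugacy class sums X_ℓ(n) = {s_i : 1 ≤ i ≤ n, ℓ does not divide i} ∪ {s_{(ℓj−1,2)} : j ≥ 1, 1 < ℓj < n} generates the center Z(ℚ[S_n]) of the group algebra ℚ[S_n] as a ℚ-algebra. -/

import Mathlib

/-- `classSum n m` is the sum, in the group algebra `ℚ[Sₙ]`, of all permutations
whose cycle type is the multiset `m` (parts of size 1 being suppressed, as in
Mathlib's `Equiv.Perm.cycleType`). -/
noncomputable def classSum (n : ℕ) (m : Multiset ℕ) : MonoidAlgebra ℚ (Equiv.Perm (Fin n)) :=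
  ∑ σ ∈ Finset.univ.filter (fun σ : Equiv.Perm (Fin n) => σ.cycleType = m),
    MonoidAlgebra.single σ (1 : ℚ)

/-- The cycle sum `sᵢ`: the sum of all `i`-cycles in `Sₙ` for `i ≥ 2`, and the
identity of `ℚ[Sₙ]` for `i ≤ 1`. -/
noncomputable def cycleSum (n i : ℕ) : MonoidAlgebra ℚ (Equiv.Perm (Fin n)) :=
  if i < 2 then 1 else classSum n {i}



namespace ClassSumAux
open Equiv Equiv.Perm Finset MonoidAlgebra

/-! ### coefficient computations -/

lemma classSum_apply (n : ℕ) (m : Multiset ℕ) (ρ : Equiv.Perm (Fin n)) :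
    (classSum n m).coeff ρ = if ρ.cycleType = m then 1 else 0 := by
  classical
  rw [classSum, MonoidAlgebra.coeff_sum, Finsupp.finset_sum_apply]
  have : ∀ σ ∈ Finset.univ.filter (fun σ : Equiv.Perm (Fin n) => σ.cycleType = m),
      (MonoidAlgebra.single σ (1:ℚ)).coeff ρ = if σ = ρ then (1:ℚ) else 0 := by
    intro σ _; rw [MonoidAlgebra.single_apply]
  rw [Finset.sum_congr rfl this, Finset.sum_ite_eq']
  simp [Finset.mem_filter]

lemma classSum_zero (n : ℕ) : classSum n 0 = 1 := by
  classical
  apply MonoidAlgebra.ext; apply Finsupp.ext; intro ρ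
  rw [classSum_apply, MonoidAlgebra.one_def, MonoidAlgebra.single_apply]
  by_cases h : ρ = 1
  · subst h; rw [if_pos Equiv.Perm.cycleType_one, if_pos rfl]
  · rw [if_neg (fun hc => h (Equiv.Perm.cycleType_eq_zero.mp hc)),
      if_neg (fun hc => h hc.symm)]

lemma classSum_eq_zero {n : ℕ} {m : Multiset ℕ}
    (h : ¬ ∃ g : Equiv.Perm (Fin n), g.cycleType = m) : classSum n m = 0 := by
  classical
  apply MonoidAlgebra.ext; apply Finsupp.ext; intro ρ
  rw [classSum_apply, if_neg (fun hc => h ⟨ρ, hc⟩)]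
  rfl

lemma classSum_mem_center (n : ℕ) (m : Multiset ℕ) :
    classSum n m ∈ Subalgebra.center ℚ (MonoidAlgebra ℚ (Equiv.Perm (Fin n))) := by
  rw [Subalgebra.mem_center_iff]
  intro b
  induction b using MonoidAlgebra.induction_on with
  | of g =>
    apply MonoidAlgebra.ext; apply Finsupp.ext; intro ρ
    rw [MonoidAlgebra.of_apply]
    rw [MonoidAlgebra.single_mul_apply, MonoidAlgebra.mul_single_apply,
      classSum_apply, classSum_apply]
    have : (g⁻¹ * ρ).cycleType = (ρ * g⁻¹).cycleType := by
      have : ρ * g⁻¹ = g * (g⁻¹ * ρ) * g⁻¹ := by group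
      rw [this, Equiv.Perm.cycleType_conj]
    rw [this, one_mul, mul_one]
  | add f g hf hg => rw [add_mul, mul_add, hf, hg]
  | smul r f hf => rw [smul_mul_assoc, mul_smul_comm, hf]

lemma coeff_conj_of_center (n : ℕ) (x : MonoidAlgebra ℚ (Equiv.Perm (Fin n)))
    (hx : x ∈ Subalgebra.center ℚ (MonoidAlgebra ℚ (Equiv.Perm (Fin n))))
    (g σ : Equiv.Perm (Fin n)) : x.coeff (g * σ * g⁻¹) = x.coeff σ := by
  rw [Subalgebra.mem_center_iff] at hx
  have h := hx (MonoidAlgebra.single g 1)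
  have h1 : (MonoidAlgebra.single g 1 * x : MonoidAlgebra ℚ (Equiv.Perm (Fin n))).coeff (g * σ)
      = (x * MonoidAlgebra.single g 1 : MonoidAlgebra ℚ (Equiv.Perm (Fin n))).coeff (g * σ) := by
    rw [h]
  rw [MonoidAlgebra.single_mul_apply, MonoidAlgebra.mul_single_apply, one_mul, mul_one,
    inv_mul_cancel_left] at h1
  rw [mul_assoc] at h1 ⊢
  exact h1.symm

lemma decomp (n : ℕ) (x : MonoidAlgebra ℚ (Equiv.Perm (Fin n)))
    (hx : x ∈ Subalgebra.center ℚ (MonoidAlgebra ℚ (Equiv.Perm (Fin n)))) :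
    ∃ c : Multiset ℕ → ℚ, (∀ σ : Equiv.Perm (Fin n), c σ.cycleType = x.coeff σ) ∧
      x = ∑ m ∈ Finset.univ.image (Equiv.Perm.cycleType (α := Fin n)), c m • classSum n m := by
  classical
  have hconst : ∀ σ τ : Equiv.Perm (Fin n), σ.cycleType = τ.cycleType → x.coeff σ = x.coeff τ := by
    intro σ τ h
    obtain ⟨g, hg⟩ := isConj_iff.mp (Equiv.Perm.isConj_of_cycleType_eq h)
    rw [← hg]
    exact (coeff_conj_of_center n x hx g σ).symm
  refine ⟨fun m => if h : ∃ σ : Equiv.Perm (Fin n), σ.cycleType = m then x.coeff h.choose else 0,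
    ?_, ?_⟩
  · intro σ
    simp only []
    rw [dif_pos (⟨σ, rfl⟩ : ∃ τ : Equiv.Perm (Fin n), τ.cycleType = σ.cycleType)]
    exact hconst _ _ (Exists.choose_spec (⟨σ, rfl⟩ : ∃ τ : Equiv.Perm (Fin n),
      τ.cycleType = σ.cycleType))
  · apply MonoidAlgebra.ext; apply Finsupp.ext; intro ρ
    rw [MonoidAlgebra.coeff_sum, Finsupp.finset_sum_apply]
    have : ∀ m ∈ Finset.univ.image (Equiv.Perm.cycleType (α := Fin n)),
        (((if h : ∃ σ : Equiv.Perm (Fin n), σ.cycleType = m then x.coeff h.choose else 0) •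
          classSum n m : MonoidAlgebra ℚ (Equiv.Perm (Fin n)))).coeff ρ
          = if ρ.cycleType = m
              then (if h : ∃ σ : Equiv.Perm (Fin n), σ.cycleType = m then x.coeff h.choose else 0)
              else 0 := by
      intro m _
      rw [MonoidAlgebra.coeff_smul_apply, classSum_apply, smul_eq_mul, mul_ite, mul_one, mul_zero]
    rw [Finset.sum_congr rfl this, Finset.sum_ite_eq]
    rw [if_pos (Finset.mem_image.mpr ⟨ρ, Finset.mem_univ ρ, rfl⟩)]
    rw [dif_pos (⟨ρ, rfl⟩ : ∃ τ : Equiv.Perm (Fin n), τ.cycleType = ρ.cycleType)]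
    exact (hconst _ _ (Exists.choose_spec (⟨ρ, rfl⟩ : ∃ τ : Equiv.Perm (Fin n),
      τ.cycleType = ρ.cycleType))).symm

lemma classSum_mul_apply (n : ℕ) (m₁ m₂ : Multiset ℕ) (ρ : Equiv.Perm (Fin n)) :
    (classSum n m₁ * classSum n m₂).coeff ρ
      = ∑ σ ∈ Finset.univ.filter (fun σ : Equiv.Perm (Fin n) => σ.cycleType = m₁),
          (if (σ⁻¹ * ρ).cycleType = m₂ then (1:ℚ) else 0) := by
  classical
  rw [classSum, Finset.sum_mul, MonoidAlgebra.coeff_sum, Finsupp.finset_sum_apply]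
  refine Finset.sum_congr rfl ?_
  intro σ _
  rw [MonoidAlgebra.single_mul_apply, one_mul, classSum_apply]

lemma exists_of_mul_apply_ne_zero {n : ℕ} {m₁ m₂ : Multiset ℕ} {ρ : Equiv.Perm (Fin n)}
    (h : (classSum n m₁ * classSum n m₂).coeff ρ ≠ 0) :
    ∃ σ τ : Equiv.Perm (Fin n), σ * τ = ρ ∧ σ.cycleType = m₁ ∧ τ.cycleType = m₂ := by
  classical
  rw [classSum_mul_apply] at h
  obtain ⟨σ, hσ, hne⟩ := Finset.exists_ne_zero_of_sum_ne_zero h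
  rw [Finset.mem_filter] at hσ
  refine ⟨σ, σ⁻¹ * ρ, by group, hσ.2, ?_⟩
  by_contra hc
  exact hne (if_neg hc)

lemma mul_apply_pos {n : ℕ} {m₁ m₂ : Multiset ℕ} {σ τ : Equiv.Perm (Fin n)}
    (hσ : σ.cycleType = m₁) (hτ : τ.cycleType = m₂) :
    0 < (classSum n m₁ * classSum n m₂).coeff (σ * τ) := by
  classical
  rw [classSum_mul_apply]
  apply Finset.sum_pos'
  · intro s _; split_ifs <;> norm_num
  · refine ⟨σ, Finset.mem_filter.mpr ⟨Finset.mem_univ σ, hσ⟩, ?_⟩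
    rw [inv_mul_cancel_left, if_pos hτ]
    norm_num



section Comb
variable {α : Type*} [DecidableEq α] [Fintype α]
 [Fintype α]

/-- Merging a fresh point into a cycle via a transposition gives a cycle. -/
lemma swap_mul_cycle {τ : Equiv.Perm α} (hτ : τ.IsCycle) {x y : α}
    (hx : x ∈ τ.support) (hy : y ∉ τ.support) :
    (Equiv.swap y x * τ).IsCycle ∧ (Equiv.swap y x * τ).support = insert y τ.support := by
  classical
  have hxy : y ≠ x := fun h => hy (h ▸ hx)
  have hτy : τ y = y := Equiv.Perm.notMem_support.mp hy
  set g : Equiv.Perm α := Equiv.swap y x * τ with hg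
  have hgy : g y = x := by
    rw [hg, Equiv.Perm.mul_apply, hτy, Equiv.swap_apply_left]
  -- action of g on support of τ
  have hgw : ∀ w ∈ τ.support, g w = if τ w = x then y else τ w := by
    intro w hw
    rw [hg, Equiv.Perm.mul_apply]
    by_cases h : τ w = x
    · simp [h]
    · rw [if_neg h, Equiv.swap_apply_of_ne_of_ne _ h]
      intro hyw
      exact hy (hyw ▸ Equiv.Perm.apply_mem_support.mpr hw)
  -- support of g
  have hsupp : g.support = insert y τ.support := by
    ext w
    rw [Equiv.Perm.mem_support, Finset.mem_insert]
    constructor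
    · intro hgw'
      by_contra hcon
      push_neg at hcon
      obtain ⟨hwy, hws⟩ := hcon
      have hws' : τ w = w := Equiv.Perm.notMem_support.mp hws
      apply hgw'
      rw [hg, Equiv.Perm.mul_apply, hws']
      exact Equiv.swap_apply_of_ne_of_ne hwy (fun h => hws (h ▸ hx))
    · rintro (rfl | hw)
      · rw [hgy]; exact Ne.symm hxy
      · rw [hgw w hw]
        split_ifs with h
        · intro hwy; exact hy (hwy ▸ hw)
        · exact fun hc => Equiv.Perm.mem_support.mp hw hc
  refine ⟨?_, hsupp⟩
  -- g is a cycle based at y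
  refine ⟨y, by rw [hgy]; exact Ne.symm hxy, ?_⟩
  intro w hw
  have hwmem : w ∈ g.support := Equiv.Perm.mem_support.mpr hw
  rw [hsupp, Finset.mem_insert] at hwmem
  rcases hwmem with rfl | hwmem
  · exact Equiv.Perm.SameCycle.refl _ _
  -- w ∈ τ.support : reach it via powers
  have hxw : τ.SameCycle x w :=
    hτ.sameCycle (Equiv.Perm.mem_support.mp hx) (Equiv.Perm.mem_support.mp hwmem)
  obtain ⟨i, _, hi⟩ := hxw.exists_pow_eq'
  have key : ∀ i : ℕ, ∃ j : ℕ, (g ^ j) y = (τ ^ i) x := by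
    intro i
    induction i with
    | zero => exact ⟨1, by simpa using hgy⟩
    | succ i ih =>
      obtain ⟨j, hj⟩ := ih
      have hmem : (τ ^ i) x ∈ τ.support := by
        rw [Equiv.Perm.pow_apply_mem_support]; exact hx
      by_cases h : τ ((τ ^ i) x) = x
      · refine ⟨j + 1 + 1, ?_⟩
        have h1 : (g ^ (j+1)) y = y := by
          rw [pow_succ' g j, Equiv.Perm.mul_apply, hj, hgw _ hmem, if_pos h]
        rw [pow_succ' g (j+1), Equiv.Perm.mul_apply, h1, hgy, pow_succ' τ i,
          Equiv.Perm.mul_apply, h]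
      · refine ⟨j + 1, ?_⟩
        rw [pow_succ' g j, Equiv.Perm.mul_apply, hj, hgw _ hmem, if_neg h,
          pow_succ' τ i, Equiv.Perm.mul_apply]
  obtain ⟨j, hj⟩ := key i
  exact ⟨j, by rw [zpow_natCast, hj, hi]⟩

lemma prod_cycleType (σ τ : Equiv.Perm α) :
    (σ * τ).cycleType = σ.cycleType + τ.cycleType ∨
      (σ * τ).cycleType.sum < σ.cycleType.sum + τ.cycleType.sum := by
  classical
  by_cases hd : σ.Disjoint τ
  · exact Or.inl (Equiv.Perm.Disjoint.cycleType_mul hd)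
  · right
    rw [Equiv.Perm.disjoint_iff_disjoint_support, Finset.disjoint_left] at hd
    push_neg at hd
    obtain ⟨x, hx1, hx2⟩ := hd
    have hinter : 1 ≤ (σ.support ∩ τ.support).card :=
      Finset.card_pos.mpr ⟨x, Finset.mem_inter.mpr ⟨hx1, hx2⟩⟩
    have hsub : (σ * τ).support ⊆ σ.support ∪ τ.support := Equiv.Perm.support_mul_le σ τ
    have h1 : (σ * τ).support.card ≤ (σ.support ∪ τ.support).card :=
      Finset.card_le_card hsub
    have h2 : (σ.support ∪ τ.support).card + (σ.support ∩ τ.support).card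
        = σ.support.card + τ.support.card := Finset.card_union_add_card_inter _ _
    rw [Equiv.Perm.sum_cycleType, Equiv.Perm.sum_cycleType, Equiv.Perm.sum_cycleType]
    omega

lemma swap_mul_cycle_type {σ τ : Equiv.Perm α} {k : ℕ}
    (hσ : σ.cycleType = {2}) (hτ : τ.cycleType = {k}) :
    (σ * τ).cycleType = 2 ::ₘ {k} ∨ (σ * τ).cycleType = {k + 1} ∨
      (σ * τ).cycleType.sum ≤ k := by
  classical
  have hσc : σ.IsSwap := by
    rw [← Equiv.Perm.card_support_eq_two, ← Equiv.Perm.sum_cycleType, hσ]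
    rfl
  have hτc : τ.IsCycle := by
    rw [← Equiv.Perm.card_cycleType_eq_one, hτ]
    rfl
  have hτk : τ.support.card = k := by rw [← Equiv.Perm.sum_cycleType, hτ]; rfl
  obtain ⟨u, v, huv, rfl⟩ := hσc
  by_cases hu : u ∈ τ.support <;> by_cases hv : v ∈ τ.support
  · -- both in support
    right; right
    have hsub : (Equiv.swap u v * τ).support ⊆ τ.support := by
      refine (Equiv.Perm.support_mul_le _ _).trans ?_
      rw [Equiv.Perm.support_swap huv]
      intro w hw
      rcases Finset.mem_union.mp hw with hw | hw
      · rcases Finset.mem_insert.mp hw with rfl | hw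
        · exact hu
        · rw [Finset.mem_singleton] at hw; exact hw ▸ hv
      · exact hw
    rw [Equiv.Perm.sum_cycleType, ← hτk]
    exact Finset.card_le_card hsub
  · -- u in, v out: swap u v = swap v u
    right; left
    rw [Equiv.swap_comm]
    obtain ⟨hc, hs⟩ := swap_mul_cycle hτc hu hv
    rw [hc.cycleType, hs, Finset.card_insert_of_notMem hv, hτk]
  · -- v in, u out
    right; left
    obtain ⟨hc, hs⟩ := swap_mul_cycle hτc hv hu
    rw [hc.cycleType, hs, Finset.card_insert_of_notMem hu, hτk]
  · -- disjoint
    left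
    have hd : (Equiv.swap u v).Disjoint τ := by
      rw [Equiv.Perm.disjoint_iff_disjoint_support, Equiv.Perm.support_swap huv,
        Finset.disjoint_left]
      intro w hw
      rcases Finset.mem_insert.mp hw with rfl | hw
      · exact hu
      · rw [Finset.mem_singleton] at hw; exact hw ▸ hv
    rw [Equiv.Perm.Disjoint.cycleType_mul hd, hσ, hτ, ← Multiset.singleton_add]

end Comb

lemma split_cycleType {n : ℕ} {ρ : Equiv.Perm (Fin n)} {a : ℕ} {ν : Multiset ℕ}
    (h : ρ.cycleType = a ::ₘ ν) :
    ∃ σ τ : Equiv.Perm (Fin n), σ * τ = ρ ∧ σ.Disjoint τ ∧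
      σ.cycleType = {a} ∧ τ.cycleType = ν := by
  classical
  have ha : a ∈ ρ.cycleType := h ▸ Multiset.mem_cons_self a ν
  rw [Equiv.Perm.cycleType_def, Multiset.mem_map] at ha
  obtain ⟨f, hf0, hfa⟩ := ha
  have hf : f ∈ ρ.cycleFactorsFinset := hf0
  have hfc : f.IsCycle := (Equiv.Perm.mem_cycleFactorsFinset_iff.mp hf).1
  have hdisj : (ρ * f⁻¹).Disjoint f :=
    Equiv.Perm.disjoint_mul_inv_of_mem_cycleFactorsFinset hf
  have hft : f.cycleType = {a} := by
    rw [hfc.cycleType]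
    simp only [Function.comp_apply] at hfa
    rw [hfa]
  refine ⟨f, ρ * f⁻¹, ?_, hdisj.symm, hft, ?_⟩
  · rw [← hdisj.commute.eq, inv_mul_cancel_right]
  · rw [Equiv.Perm.cycleType_mul_inv_mem_cycleFactorsFinset_eq_sub hf, h, hft,
      ← Multiset.singleton_add, add_tsub_cancel_left]


def Xset (n ℓ : ℕ) : Set (MonoidAlgebra ℚ (Equiv.Perm (Fin n))) :=
  {x | (∃ i, 1 ≤ i ∧ i ≤ n ∧ ¬ ℓ ∣ i ∧ x = cycleSum n i) ∨
       (∃ j, 1 ≤ j ∧ 1 < ℓ * j ∧ ℓ * j < n ∧ x = classSum n {ℓ * j - 1, 2})}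

lemma key (n ℓ : ℕ) (hℓ : 2 < ℓ) :
    ∀ k (m : Multiset ℕ), m.sum ≤ k → (∃ g : Equiv.Perm (Fin n), g.cycleType = m) →
      classSum n m ∈ Algebra.adjoin ℚ (Xset n ℓ) := by
  intro k
  induction k with
  | zero =>
    intro m hsum hvalid
    obtain ⟨g₀, hg₀⟩ := hvalid
    have hm0 : m = 0 := by
      by_contra h
      obtain ⟨b, hb⟩ := Multiset.exists_mem_of_ne_zero h
      have h1 := Equiv.Perm.two_le_of_mem_cycleType (hg₀ ▸ hb)
      have h2 := Multiset.single_le_sum (fun x _ => Nat.zero_le x) b hb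
      omega
    rw [hm0, classSum_zero]
    exact one_mem _
  | succ k ih =>
    intro m hsum hvalid
    obtain ⟨g₀, hg₀⟩ := hvalid
    have hparts : ∀ b ∈ m, 2 ≤ b := fun b hb =>
      Equiv.Perm.two_le_of_mem_cycleType (hg₀ ▸ hb)
    have hsumn : m.sum ≤ n := by
      rw [← hg₀, Equiv.Perm.sum_cycleType]
      simpa using (Equiv.Perm.support g₀).card_le_univ
    by_cases hm0 : m = 0
    · rw [hm0, classSum_zero]; exact one_mem _
    obtain ⟨a, ha⟩ := Multiset.exists_mem_of_ne_zero hm0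
    have hm : m = a ::ₘ m.erase a := (Multiset.cons_erase ha).symm
    have ha2 : 2 ≤ a := hparts a ha
    have hasum : m.sum = a + (m.erase a).sum := by
      conv_lhs => rw [hm]
      rw [Multiset.sum_cons]
    by_cases hν0 : m.erase a = 0
    · -- single cycle m = {a}
      have hma : m = {a} := by rw [hm, hν0]; exact Multiset.cons_zero a
      have han : a ≤ n := by rw [hasum, hν0] at hsumn; simpa using hsumn
      have hak : a ≤ k + 1 := by rw [hasum, hν0] at hsum; simpa using hsum
      by_cases hdvd : ℓ ∣ a
      · have hla : ℓ ≤ a := Nat.le_of_dvd (by omega) hdvd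
        have ha3 : 3 ≤ a := by omega
        have h2mem : classSum n {2} ∈ Algebra.adjoin ℚ (Xset n ℓ) := by
          apply Algebra.subset_adjoin
          left
          exact ⟨2, by norm_num, by omega,
            fun hdd => absurd (Nat.le_of_dvd (by norm_num) hdd) (by omega),
            by rw [cycleSum, if_neg (by norm_num)]⟩
        have h3mem : classSum n {a - 1} ∈ Algebra.adjoin ℚ (Xset n ℓ) := by
          apply Algebra.subset_adjoin
          left
          refine ⟨a - 1, by omega, by omega, ?_, by rw [cycleSum, if_neg (by omega)]⟩
          intro hdd
          have hd1 : ℓ ∣ a - (a - 1) := Nat.dvd_sub hdvd hdd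
          rw [show a - (a - 1) = 1 by omega] at hd1
          exact absurd (Nat.le_of_dvd one_pos hd1) (by omega)
        have hGmem : classSum n {a - 1, 2} ∈ Algebra.adjoin ℚ (Xset n ℓ) := by
          rcases lt_or_eq_of_le han with han' | han'
          · apply Algebra.subset_adjoin
            right
            have hmul : ℓ * (a / ℓ) = a := Nat.mul_div_cancel' hdvd
            refine ⟨a / ℓ, ?_, ?_, ?_, ?_⟩
            · exact (Nat.one_le_div_iff (show 0 < ℓ by omega)).mpr hla
            · rw [hmul]; omega
            · rw [hmul]; exact han'
            · rw [hmul]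
          · have hz : classSum n {a - 1, 2} = 0 := by
              apply classSum_eq_zero
              rintro ⟨g, hg⟩
              have h1 : g.cycleType.sum ≤ n := by
                rw [Equiv.Perm.sum_cycleType]
                simpa using (Equiv.Perm.support g).card_le_univ
              rw [hg] at h1
              have h2 : ({a - 1, 2} : Multiset ℕ).sum = a - 1 + 2 := by
                rw [Multiset.insert_eq_cons, Multiset.sum_cons, Multiset.sum_singleton]
              omega
            rw [hz]
            exact zero_mem _
        have hx : classSum n {2} * classSum n {a - 1} ∈ Algebra.adjoin ℚ (Xset n ℓ) :=
          mul_mem h2mem h3mem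
        obtain ⟨c, hc, hxeq⟩ := decomp n _
          (mul_mem (classSum_mem_center n {2}) (classSum_mem_center n {a - 1}))
        have hga : g₀.cycleType = {a} := by rw [hg₀, hma]
        have himg : ({a} : Multiset ℕ) ∈
            Finset.univ.image (Equiv.Perm.cycleType (α := Fin n)) :=
          Finset.mem_image.mpr ⟨g₀, Finset.mem_univ _, hga⟩
        rw [← Finset.add_sum_erase _ _ himg] at hxeq
        have hrest : ∀ m' ∈
            (Finset.univ.image (Equiv.Perm.cycleType (α := Fin n))).erase {a},
            c m' • classSum n m' ∈ Algebra.adjoin ℚ (Xset n ℓ) := by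
          intro m' hm'
          obtain ⟨hne, hm'img⟩ := Finset.mem_erase.mp hm'
          by_cases hc0 : c m' = 0
          · rw [hc0, zero_smul]; exact zero_mem _
          obtain ⟨ρ, _, hρ⟩ := Finset.mem_image.mp hm'img
          have hcx : c m' = (classSum n {2} * classSum n {a - 1}).coeff ρ := by
            rw [← hρ]; exact hc ρ
          have hxρ : (classSum n {2} * classSum n {a - 1}).coeff ρ ≠ 0 := by
            rw [← hcx]; exact hc0
          obtain ⟨σ, τ, hστ, hσ, hτ⟩ := exists_of_mul_apply_ne_zero hxρ
          rcases swap_mul_cycle_type hσ hτ with hcase | hcase | hcase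
          · rw [hστ] at hcase
            have hm'eq : m' = 2 ::ₘ {a - 1} := by rw [← hρ, hcase]
            have heq2 : ({a - 1, 2} : Multiset ℕ) = 2 ::ₘ {a - 1} := by
              rw [Multiset.pair_comm, Multiset.insert_eq_cons]
            rw [hm'eq, ← heq2]
            exact Subalgebra.smul_mem _ hGmem _
          · rw [hστ] at hcase
            have : m' = {a} := by
              rw [← hρ, hcase, show a - 1 + 1 = a by omega]
            exact absurd this hne
          · rw [hστ] at hcase
            apply Subalgebra.smul_mem
            apply ih m' _ ⟨ρ, hρ⟩
            rw [← hρ]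
            omega
        have hca : c {a} ≠ 0 := by
          have hτ0ex : ∃ τ₀ : Equiv.Perm (Fin n), τ₀.cycleType = {a - 1} := by
            rw [Equiv.Perm.exists_with_cycleType_iff]
            constructor
            · rw [Multiset.sum_singleton, Fintype.card_fin]; omega
            · intro b hb; rw [Multiset.mem_singleton] at hb; omega
          obtain ⟨τ₀, hτ0⟩ := hτ0ex
          have hτ0c : τ₀.IsCycle := by
            rw [← Equiv.Perm.card_cycleType_eq_one, hτ0]; rfl
          have hτ0k : τ₀.support.card = a - 1 := by
            rw [← Equiv.Perm.sum_cycleType, hτ0, Multiset.sum_singleton]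
          obtain ⟨x₀, hx₀⟩ := Finset.card_pos.mp (show 0 < τ₀.support.card by omega)
          have hyex : ∃ y, y ∉ τ₀.support := by
            by_contra h; push_neg at h
            have huniv : τ₀.support = Finset.univ := Finset.eq_univ_iff_forall.mpr h
            rw [huniv, Finset.card_univ, Fintype.card_fin] at hτ0k
            omega
          obtain ⟨y, hy⟩ := hyex
          obtain ⟨hc1, hs1⟩ := swap_mul_cycle hτ0c hx₀ hy
          have hyx : y ≠ x₀ := fun h => hy (h ▸ hx₀)
          have hρ0 : (Equiv.swap y x₀ * τ₀).cycleType = {a} := by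
            rw [hc1.cycleType, hs1, Finset.card_insert_of_notMem hy, hτ0k,
              show a - 1 + 1 = a by omega]
          have hswap : (Equiv.swap y x₀).cycleType = {2} := by
            rw [(Equiv.Perm.isCycle_swap hyx).cycleType, Equiv.Perm.support_swap hyx]
            rw [Finset.card_insert_of_notMem (by simp [hyx]), Finset.card_singleton]
          have hpos := mul_apply_pos hswap hτ0
          have hceq : c {a} = (classSum n {2} * classSum n {a - 1}).coeff
              (Equiv.swap y x₀ * τ₀) := by
            rw [← hρ0]; exact hc _
          rw [hceq]
          exact ne_of_gt hpos
        have hsol : c {a} • classSum n {a} = classSum n {2} * classSum n {a - 1}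
            - ∑ m' ∈ (Finset.univ.image (Equiv.Perm.cycleType (α := Fin n))).erase {a},
                c m' • classSum n m' := eq_sub_of_add_eq hxeq.symm
        rw [hma]
        have hfin : classSum n {a} = (c {a})⁻¹ • (c {a} • classSum n {a}) := by
          rw [smul_smul, inv_mul_cancel₀ hca, one_smul]
        rw [hfin, hsol]
        exact Subalgebra.smul_mem _ (sub_mem hx (sum_mem hrest)) _
      · rw [hma]
        apply Algebra.subset_adjoin
        left
        exact ⟨a, by omega, han, hdvd, by rw [cycleSum, if_neg (by omega)]⟩
    · -- multi-part case
      obtain ⟨b, hb⟩ := Multiset.exists_mem_of_ne_zero hν0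
      have hb2 : 2 ≤ b := hparts b (Multiset.mem_of_mem_erase hb)
      have hνsum : 2 ≤ (m.erase a).sum :=
        le_trans hb2 (Multiset.single_le_sum (fun x _ => Nat.zero_le x) b hb)
      have haA : classSum n {a} ∈ Algebra.adjoin ℚ (Xset n ℓ) := by
        apply ih
        · rw [Multiset.sum_singleton]; omega
        · rw [Equiv.Perm.exists_with_cycleType_iff]
          constructor
          · rw [Multiset.sum_singleton, Fintype.card_fin]; omega
          · intro b' hb'; rw [Multiset.mem_singleton] at hb'; omega
      have hνA : classSum n (m.erase a) ∈ Algebra.adjoin ℚ (Xset n ℓ) := by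
        apply ih
        · omega
        · rw [Equiv.Perm.exists_with_cycleType_iff]
          constructor
          · rw [Fintype.card_fin]; omega
          · exact fun b' hb' => hparts b' (Multiset.mem_of_mem_erase hb')
      have hx : classSum n {a} * classSum n (m.erase a) ∈ Algebra.adjoin ℚ (Xset n ℓ) :=
        mul_mem haA hνA
      obtain ⟨c, hc, hxeq⟩ := decomp n _
        (mul_mem (classSum_mem_center n {a}) (classSum_mem_center n (m.erase a)))
      have himg : m ∈ Finset.univ.image (Equiv.Perm.cycleType (α := Fin n)) :=
        Finset.mem_image.mpr ⟨g₀, Finset.mem_univ _, hg₀⟩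
      rw [← Finset.add_sum_erase _ _ himg] at hxeq
      have hrest : ∀ m' ∈
          (Finset.univ.image (Equiv.Perm.cycleType (α := Fin n))).erase m,
          c m' • classSum n m' ∈ Algebra.adjoin ℚ (Xset n ℓ) := by
        intro m' hm'
        obtain ⟨hne, hm'img⟩ := Finset.mem_erase.mp hm'
        by_cases hc0 : c m' = 0
        · rw [hc0, zero_smul]; exact zero_mem _
        obtain ⟨ρ, _, hρ⟩ := Finset.mem_image.mp hm'img
        have hcx : c m' = (classSum n {a} * classSum n (m.erase a)).coeff ρ := by
          rw [← hρ]; exact hc ρ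
        have hxρ : (classSum n {a} * classSum n (m.erase a)).coeff ρ ≠ 0 := by
          rw [← hcx]; exact hc0
        obtain ⟨σ, τ, hστ, hσ, hτ⟩ := exists_of_mul_apply_ne_zero hxρ
        rcases prod_cycleType σ τ with hcase | hcase
        · rw [hστ, hσ, hτ] at hcase
          have : m' = m := by rw [← hρ, hcase, Multiset.singleton_add, ← hm]
          exact absurd this hne
        · rw [hστ, hσ, hτ, Multiset.sum_singleton] at hcase
          apply Subalgebra.smul_mem
          apply ih m' _ ⟨ρ, hρ⟩
          rw [← hρ]
          omega
      have hcm : c m ≠ 0 := by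
        obtain ⟨σ₀, τ₀, hστ₀, _, hσ₀, hτ₀⟩ := split_cycleType (hm ▸ hg₀)
        have hpos := mul_apply_pos hσ₀ hτ₀
        have hceq : c m = (classSum n {a} * classSum n (m.erase a)).coeff (σ₀ * τ₀) := by
          have htype : (σ₀ * τ₀).cycleType = m := by rw [hστ₀, hg₀]
          have h' := hc (σ₀ * τ₀)
          rw [htype] at h'
          exact h'
        rw [hceq]
        exact ne_of_gt hpos
      have hsol : c m • classSum n m = classSum n {a} * classSum n (m.erase a)
          - ∑ m' ∈ (Finset.univ.image (Equiv.Perm.cycleType (α := Fin n))).erase m,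
              c m' • classSum n m' := eq_sub_of_add_eq hxeq.symm
      have hfin : classSum n m = (c m)⁻¹ • (c m • classSum n m) := by
        rw [smul_smul, inv_mul_cancel₀ hcm, one_smul]
      rw [hfin, hsol]
      exact Subalgebra.smul_mem _ (sub_mem hx (sum_mem hrest)) _

end ClassSumAux


/-- For `ℓ > 2`, the class sums
`X_ℓ(n) = {sᵢ : 1 ≤ i ≤ n, ℓ ∤ i} ∪ {s_{(ℓj−1,2)} : 1 < ℓj < n}` generate the
center of `ℚ[Sₙ]` as a ℚ-algebra. -/
theorem adjoin_X_eq_center (n ℓ : ℕ) (hℓ : 2 < ℓ) :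
    Algebra.adjoin ℚ {x : MonoidAlgebra ℚ (Equiv.Perm (Fin n)) |
        (∃ i, 1 ≤ i ∧ i ≤ n ∧ ¬ ℓ ∣ i ∧ x = cycleSum n i) ∨
        (∃ j, 1 ≤ j ∧ 1 < ℓ * j ∧ ℓ * j < n ∧ x = classSum n {ℓ * j - 1, 2})} =
      Subalgebra.center ℚ (MonoidAlgebra ℚ (Equiv.Perm (Fin n))) := by
  apply le_antisymm
  · apply Algebra.adjoin_le
    rintro x (⟨i, _, _, _, rfl⟩ | ⟨j, _, _, _, rfl⟩)
    · rw [cycleSum]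
      split_ifs
      · exact one_mem _
      · exact ClassSumAux.classSum_mem_center n {i}
    · exact ClassSumAux.classSum_mem_center n _
  · intro z hz
    obtain ⟨c, hc, hzeq⟩ := ClassSumAux.decomp n z hz
    rw [hzeq]
    apply sum_mem
    intro m' hm'
    obtain ⟨ρ, _, hρ⟩ := Finset.mem_image.mp hm'
    exact Subalgebra.smul_mem _ (ClassSumAux.key n ℓ hℓ m'.sum m' le_rfl ⟨ρ, hρ⟩) _
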